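/- Let Q ∈ ℝ^{n×r} have orthonormal columns, B ∈ ℝ^{n×N}, and Φ ∈ ℝ^{m×n}. Suppose (i) ΦQ has full column rank and all eigenvalues of QᵀΦᵀΦQ lie in [1/2, 3/2] (so ‖QᵀΦᵀΦQ − I‖ ≤ 1/2 in operator norm), and (ii) ‖QᵀΦᵀΦ(I − QQᵀ)B‖_F ≤ (ε/(2√r))·‖Qᵀ‖_F·‖(I − QQᵀ)B‖_F. Then ‖(ΦQ)†ΦB‖_F ≤ (1+ε)‖B‖_F, where (ΦQ)† denotes the Moore–Penrose pseudoinverse of ΦQ. -/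

import Mathlib

open Matrix

namespace Stmt17Aux

attribute [local instance] Matrix.frobeniusNormedAddCommGroup

noncomputable def fn {a b : ℕ} (A : Matrix (Fin a) (Fin b) ℝ) : ℝ :=
  Real.sqrt (∑ i, ∑ j, A i j ^ 2)

lemma fn_eq_norm {a b : ℕ} (A : Matrix (Fin a) (Fin b) ℝ) : fn A = ‖A‖ := by
  rw [fn, Matrix.frobenius_norm_def, Real.sqrt_eq_rpow]
  congr 1
  refine Finset.sum_congr rfl fun i _ => Finset.sum_congr rfl fun j _ => ?_
  rw [Real.norm_eq_abs, show ((2:ℝ)) = ((2:ℕ):ℝ) by norm_num, Real.rpow_natCast, sq_abs]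

lemma fn_nonneg {a b : ℕ} (A : Matrix (Fin a) (Fin b) ℝ) : 0 ≤ fn A := Real.sqrt_nonneg _

lemma fn_add_le {a b : ℕ} (A C : Matrix (Fin a) (Fin b) ℝ) : fn (A + C) ≤ fn A + fn C := by
  rw [fn_eq_norm, fn_eq_norm, fn_eq_norm]; exact norm_add_le _ _

lemma fsq_trace {a b : ℕ} (A : Matrix (Fin a) (Fin b) ℝ) :
    ∑ i, ∑ j, A i j ^ 2 = (Aᵀ * A).trace := by
  simp only [Matrix.trace, Matrix.diag, Matrix.mul_apply, Matrix.transpose_apply, sq]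
  exact Finset.sum_comm

lemma inner_trace {a b : ℕ} (A C : Matrix (Fin a) (Fin b) ℝ) :
    ∑ i, ∑ j, A i j * C i j = (Aᵀ * C).trace := by
  simp only [Matrix.trace, Matrix.diag, Matrix.mul_apply, Matrix.transpose_apply]
  exact Finset.sum_comm

end Stmt17Aux

open Stmt17Aux

theorem stmt_17 {m n N r : ℕ} (ε : ℝ) (hε : 0 < ε) (hr : r ≤ n) (hr0 : 0 < r)
    (Q : Matrix (Fin n) (Fin r) ℝ) (hQ : Qᵀ * Q = 1)
    (B : Matrix (Fin n) (Fin N) ℝ) (Φ : Matrix (Fin m) (Fin n) ℝ)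
    (hrank : (Φ * Q).rank = r)
    (heig : ∀ y : Fin r → ℝ,
      (1 / 2) * ∑ i, y i ^ 2 ≤ y ⬝ᵥ ((Qᵀ * Φᵀ * Φ * Q) *ᵥ y) ∧
      y ⬝ᵥ ((Qᵀ * Φᵀ * Φ * Q) *ᵥ y) ≤ (3 / 2) * ∑ i, y i ^ 2)
    (hamm : Real.sqrt (∑ i, ∑ j, (Qᵀ * Φᵀ * Φ * (((1 : Matrix (Fin n) (Fin n) ℝ) - Q * Qᵀ) * B)) i j ^ 2)
      ≤ ε / (2 * Real.sqrt r) * Real.sqrt (∑ i, ∑ j, Qᵀ i j ^ 2)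
        * Real.sqrt (∑ i, ∑ j, (((1 : Matrix (Fin n) (Fin n) ℝ) - Q * Qᵀ) * B) i j ^ 2)) :
    Real.sqrt (∑ i, ∑ j, (((Φ * Q)ᵀ * (Φ * Q))⁻¹ * (Φ * Q)ᵀ * (Φ * B)) i j ^ 2)
      ≤ (1 + ε) * Real.sqrt (∑ i, ∑ j, B i j ^ 2) := by
  classical
  set P : Matrix (Fin n) (Fin n) ℝ := (1 : Matrix (Fin n) (Fin n) ℝ) - Q * Qᵀ with hPdef
  set M : Matrix (Fin r) (Fin r) ℝ := Qᵀ * Φᵀ * Φ * Q with hMdef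
  set Y : Matrix (Fin r) (Fin N) ℝ := Qᵀ * B with hYdef
  set E : Matrix (Fin r) (Fin N) ℝ := Qᵀ * Φᵀ * Φ * (P * B) with hEdef
  -- positive definiteness of M
  have hMpd : M.PosDef := by
    rw [Matrix.posDef_iff_dotProduct_mulVec]
    constructor
    · show Mᴴ = M
      rw [Matrix.conjTranspose_eq_transpose_of_trivial]
      simp [hMdef, Matrix.transpose_mul, Matrix.mul_assoc]
    · intro x hx
      have h := (heig x).1
      obtain ⟨i, hi⟩ := Function.ne_iff.mp hx
      have hs : 0 < ∑ i, x i ^ 2 :=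
        Finset.sum_pos' (fun j _ => sq_nonneg _)
          ⟨i, Finset.mem_univ i, sq_pos_of_ne_zero hi⟩
      have : (0:ℝ) < x ⬝ᵥ (M *ᵥ x) := lt_of_lt_of_le (by linarith) h
      simpa using this
  have hMunit : IsUnit M.det := M.isUnit_iff_isUnit_det.mp hMpd.isUnit
  -- key algebraic decomposition
  have h1 : (Φ * Q)ᵀ * (Φ * Q) = M := by
    simp [hMdef, Matrix.transpose_mul, Matrix.mul_assoc]
  have h2 : (Φ * Q)ᵀ * (Φ * B) = M * Y + E := by
    simp only [hMdef, hYdef, hEdef, hPdef, Matrix.transpose_mul, Matrix.mul_assoc,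
      Matrix.sub_mul, Matrix.mul_sub, Matrix.one_mul, Matrix.mul_one]
    abel
  have key : ((Φ * Q)ᵀ * (Φ * Q))⁻¹ * (Φ * Q)ᵀ * (Φ * B) = Y + M⁻¹ * E := by
    rw [h1, Matrix.mul_assoc, h2, Matrix.mul_add, ← Matrix.mul_assoc,
      Matrix.nonsing_inv_mul M hMunit, Matrix.one_mul]
  -- vector bound : ‖M⁻¹ x‖ ≤ 2 ‖x‖ (squared)
  have hvec : ∀ x : Fin r → ℝ, ∑ i, (M⁻¹ *ᵥ x) i ^ 2 ≤ 4 * ∑ i, x i ^ 2 := by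
    intro x
    set y := M⁻¹ *ᵥ x with hy
    have hxy : M *ᵥ y = x := by
      rw [hy, Matrix.mulVec_mulVec, Matrix.mul_nonsing_inv M hMunit, Matrix.one_mulVec]
    have h1' := (heig y).1
    rw [hxy] at h1'
    have h2' : (y ⬝ᵥ x) ^ 2 ≤ (∑ i, y i ^ 2) * (∑ i, x i ^ 2) := by
      simpa [dotProduct] using Finset.sum_mul_sq_le_sq_mul_sq Finset.univ y x
    have hs0 : 0 ≤ ∑ i, y i ^ 2 := Finset.sum_nonneg fun _ _ => sq_nonneg _
    have ht0 : 0 ≤ ∑ i, x i ^ 2 := Finset.sum_nonneg fun _ _ => sq_nonneg _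
    rcases eq_or_lt_of_le hs0 with h | h
    · linarith
    · have hss : (∑ i, y i ^ 2) * (∑ i, y i ^ 2) ≤ (∑ i, y i ^ 2) * (4 * ∑ i, x i ^ 2) := by
        nlinarith
      exact le_of_mul_le_mul_left hss h
  -- matrix bound : ‖M⁻¹ E‖_F² ≤ 4 ‖E‖_F²
  have hinvE : ∑ i, ∑ j, (M⁻¹ * E) i j ^ 2 ≤ 4 * ∑ i, ∑ j, E i j ^ 2 := by
    calc ∑ i, ∑ j, (M⁻¹ * E) i j ^ 2
        = ∑ j, ∑ i, (M⁻¹ *ᵥ (fun k => E k j)) i ^ 2 := by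
          rw [Finset.sum_comm]
          refine Finset.sum_congr rfl fun j _ => Finset.sum_congr rfl fun i _ => ?_
          simp [Matrix.mulVec, Matrix.mul_apply, dotProduct]
      _ ≤ ∑ j, 4 * ∑ i, E i j ^ 2 := Finset.sum_le_sum fun j _ => hvec _
      _ = 4 * ∑ i, ∑ j, E i j ^ 2 := by rw [← Finset.mul_sum, Finset.sum_comm]
  -- Pythagoras
  have hdecomp : B = Q * Y + P * B := by
    simp [hPdef, hYdef, Matrix.sub_mul, Matrix.mul_assoc]
  have hQP : Qᵀ * P = 0 := by
    simp [hPdef, Matrix.mul_sub, ← Matrix.mul_assoc, hQ]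
  have hQY : ∑ i, ∑ j, (Q * Y) i j ^ 2 = ∑ i, ∑ j, Y i j ^ 2 := by
    rw [fsq_trace, fsq_trace]
    congr 1
    rw [Matrix.transpose_mul, Matrix.mul_assoc, ← Matrix.mul_assoc Qᵀ, hQ, Matrix.one_mul]
  have hzero : ∑ i, ∑ j, (Q * Y) i j * (P * B) i j = 0 := by
    rw [inner_trace, Matrix.transpose_mul, Matrix.mul_assoc, ← Matrix.mul_assoc Qᵀ, hQP]
    simp
  have hpyth : ∑ i, ∑ j, B i j ^ 2 = (∑ i, ∑ j, Y i j ^ 2) + ∑ i, ∑ j, (P * B) i j ^ 2 := by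
    conv_lhs => rw [hdecomp]
    have expand : ∀ i j, (Q * Y + P * B) i j ^ 2
        = (Q * Y) i j ^ 2 + 2 * ((Q * Y) i j * (P * B) i j) + (P * B) i j ^ 2 := by
      intro i j; simp only [Matrix.add_apply]; ring
    simp_rw [expand, Finset.sum_add_distrib, ← Finset.mul_sum]
    rw [hzero, hQY]
    ring
  have hPB0 : 0 ≤ ∑ i, ∑ j, (P * B) i j ^ 2 :=
    Finset.sum_nonneg fun _ _ => Finset.sum_nonneg fun _ _ => sq_nonneg _
  have hY0 : 0 ≤ ∑ i, ∑ j, Y i j ^ 2 :=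
    Finset.sum_nonneg fun _ _ => Finset.sum_nonneg fun _ _ => sq_nonneg _
  have hYB : fn Y ≤ fn B := Real.sqrt_le_sqrt (by linarith)
  have hPBB : fn (P * B) ≤ fn B := Real.sqrt_le_sqrt (by linarith)
  -- ‖Qᵀ‖_F = √r
  have hQfr : ∑ i, ∑ j, (Qᵀ) i j ^ 2 = (r : ℝ) := by
    rw [fsq_trace, Matrix.transpose_transpose, Matrix.trace_mul_comm, hQ, Matrix.trace_one]
    simp
  have hsr : (0:ℝ) < Real.sqrt r := Real.sqrt_pos.mpr (by exact_mod_cast hr0)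
  have hammE : fn E ≤ (ε / 2) * fn (P * B) := by
    have : fn E ≤ ε / (2 * Real.sqrt r) * Real.sqrt (∑ i, ∑ j, (Qᵀ) i j ^ 2) * fn (P * B) :=
      hamm
    rw [hQfr] at this
    calc fn E ≤ ε / (2 * Real.sqrt r) * Real.sqrt r * fn (P * B) := this
      _ = (ε / 2) * fn (P * B) := by field_simp
  -- 2 fn E bound on fn (M⁻¹ E)
  have hME : fn (M⁻¹ * E) ≤ 2 * fn E := by
    have h4 : Real.sqrt (4 * ∑ i, ∑ j, E i j ^ 2) = 2 * fn E := by
      rw [show (4:ℝ) = 2 ^ 2 by norm_num, Real.sqrt_mul (by positivity), Real.sqrt_sq (by norm_num)]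
      rfl
    calc fn (M⁻¹ * E) ≤ Real.sqrt (4 * ∑ i, ∑ j, E i j ^ 2) := Real.sqrt_le_sqrt hinvE
      _ = 2 * fn E := h4
  -- final assembly
  show fn (((Φ * Q)ᵀ * (Φ * Q))⁻¹ * (Φ * Q)ᵀ * (Φ * B)) ≤ (1 + ε) * fn B
  rw [key]
  have htr : fn (Y + M⁻¹ * E) ≤ fn Y + fn (M⁻¹ * E) := fn_add_le _ _
  have hPBe : ε * fn (P * B) ≤ ε * fn B := by
    exact mul_le_mul_of_nonneg_left hPBB (le_of_lt hε)
  calc fn (Y + M⁻¹ * E) ≤ fn Y + fn (M⁻¹ * E) := htr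
    _ ≤ fn Y + 2 * fn E := by linarith
    _ ≤ fn B + 2 * ((ε / 2) * fn (P * B)) := by linarith
    _ = fn B + ε * fn (P * B) := by ring
    _ ≤ fn B + ε * fn B := by linarith
    _ = (1 + ε) * fn B := by ring
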